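/- arXiv:1205.1721 — 10 statements merged into one kernel-verified Lean document; each statement's English description precedes it below -/
import Mathlib

section
/- Let n be a positive integer, let p_1, …, p_n ∈ [0,1] and let r_1, …, r_n ≥ 0 be real numbers such that for every subset S ⊆ {1, …, n} one has ∑_{i∈S} r_i ≤ 1 − ∏_{i∈S} (1 − p_i). Then there exists a probability distribution w on the permutations π of {1, …, n} (i.e. w(π) ≥ 0 for every permutation π and ∑_π w(π) = 1) such that for every index i, ∑_π w(π) · p_i · ∏_{j : π(j) < π(i)} (1 − p_j) ≥ r_i. -/
open Finset

/-- Abel summation identity. -/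
lemma abel_id (n : ℕ) (c D : ℕ → ℝ) :
    ∑ k ∈ range n, c k * (D (k + 1) - D k)
      = (∑ k ∈ range n, (c k - c (k + 1)) * D (k + 1)) + c n * D n - c 0 * D 0 := by
  induction n with
  | zero => simp
  | succ m ih => rw [Finset.sum_range_succ, ih, Finset.sum_range_succ]; ring

lemma abel_nonneg (n : ℕ) (c D : ℕ → ℝ) (hcn : c n = 0) (hD0 : D 0 = 0)
    (hc : ∀ k, k < n → c (k + 1) ≤ c k) (hD : ∀ k, k ≤ n → 0 ≤ D k) :
    0 ≤ ∑ k ∈ range n, c k * (D (k + 1) - D k) := by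
  rw [abel_id, hcn, hD0]
  have : 0 ≤ ∑ k ∈ range n, (c k - c (k + 1)) * D (k + 1) :=
    Finset.sum_nonneg fun k hk => mul_nonneg
      (by have := hc k (Finset.mem_range.mp hk); linarith)
      (hD (k + 1) (Finset.mem_range.mp hk))
  linarith

/-- Bridge a product over `{m : Fin n | ↑m < k}` to a product over `range k`. -/
lemma bridge_prod {n : ℕ} (k : ℕ) (hk : k ≤ n) (f : Fin n → ℝ) :
    ∏ m ∈ Finset.univ.filter (fun m : Fin n => (m : ℕ) < k), f m
      = ∏ m ∈ Finset.range k, (if h : m < n then f ⟨m, h⟩ else 1) := by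
  set F : ℕ → ℝ := fun m => if h : m < n then (if (m : ℕ) < k then f ⟨m, h⟩ else 1) else 1 with hF
  rw [Finset.prod_filter]
  have h1 : ∏ m : Fin n, (if (m : ℕ) < k then f m else 1) = ∏ m ∈ range n, F m := by
    rw [← Fin.prod_univ_eq_prod_range]
    exact Finset.prod_congr rfl fun m _ => by simp [hF, m.isLt]
  rw [h1]
  rw [← Finset.prod_subset (Finset.range_subset_range.mpr hk)
    (fun x _ hx => by simp only [hF]; have h2 : ¬ x < k := (by simpa using hx); simp [h2])]
  exact Finset.prod_congr rfl fun m hm => by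
    have hmk := Finset.mem_range.mp hm
    simp [hF, hmk, lt_of_lt_of_le hmk hk]

lemma bridge_sum {n : ℕ} (k : ℕ) (hk : k ≤ n) (f : Fin n → ℝ) :
    ∑ m ∈ Finset.univ.filter (fun m : Fin n => (m : ℕ) < k), f m
      = ∑ m ∈ Finset.range k, (if h : m < n then f ⟨m, h⟩ else 0) := by
  set F : ℕ → ℝ := fun m => if h : m < n then (if (m : ℕ) < k then f ⟨m, h⟩ else 0) else 0 with hF
  rw [Finset.sum_filter]
  have h1 : ∑ m : Fin n, (if (m : ℕ) < k then f m else 0) = ∑ m ∈ range n, F m := by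
    rw [← Fin.sum_univ_eq_sum_range]
    exact Finset.sum_congr rfl fun m _ => by simp [hF, m.isLt]
  rw [h1]
  rw [← Finset.sum_subset (Finset.range_subset_range.mpr hk)
    (fun x _ hx => by simp only [hF]; have h2 : ¬ x < k := (by simpa using hx); simp [h2])]
  exact Finset.sum_congr rfl fun m hm => by
    have hmk := Finset.mem_range.mp hm
    simp [hF, hmk, lt_of_lt_of_le hmk hk]
open Finset

lemma Equiv.Perm.inv_apply_self {α : Type*} (f : Equiv.Perm α) (x : α) : f⁻¹ (f x) = x :=
  Equiv.symm_apply_apply f x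

lemma Equiv.Perm.apply_inv_self {α : Type*} (f : Equiv.Perm α) (x : α) : f (f⁻¹ x) = x :=
  Equiv.apply_symm_apply f x

section
variable {n : ℕ}

/-- Greedy bound: for nonnegative weights `y` there is a permutation whose
first-occurrence vector `y`-dominates `r`. -/
lemma greedy_perm (p r : Fin n → ℝ)
    (hcon : ∀ S : Finset (Fin n), ∑ i ∈ S, r i ≤ 1 - ∏ i ∈ S, (1 - p i))
    (y : Fin n → ℝ) (hy : ∀ i, 0 ≤ y i) :
    ∃ π : Equiv.Perm (Fin n),
      ∑ i, y i * r i ≤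
        ∑ i, y i * (p i * ∏ j ∈ Finset.univ.filter (fun j => π j < π i), (1 - p j)) := by
  classical
  set σ : Equiv.Perm (Fin n) := Tuple.sort (fun i => -(y i)) with hσ
  have hmono : Monotone ((fun i => -(y i)) ∘ σ) := Tuple.monotone_sort _
  have hanti : ∀ a b : Fin n, a ≤ b → y (σ b) ≤ y (σ a) := by
    intro a b hab
    have := hmono hab
    simpa using this
  refine ⟨σ⁻¹, ?_⟩
  -- extend scanned data to ℕ
  set pe : ℕ → ℝ := fun m => if h : m < n then p (σ ⟨m, h⟩) else 0 with hpe
  set re : ℕ → ℝ := fun m => if h : m < n then r (σ ⟨m, h⟩) else 0 with hre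
  set ye : ℕ → ℝ := fun m => if h : m < n then y (σ ⟨m, h⟩) else 0 with hye
  set G : ℕ → ℝ := fun k => ∏ m ∈ range k, (1 - pe m) with hG
  set R : ℕ → ℝ := fun k => ∑ m ∈ range k, re m with hR
  -- LHS
  have hL : ∑ i, y i * r i = ∑ k ∈ range n, ye k * re k := by
    rw [← Equiv.sum_comp σ (fun i => y i * r i), ← Fin.sum_univ_eq_sum_range
      (fun k => ye k * re k)]
    exact Finset.sum_congr rfl fun m _ => by simp [hye, hre, m.isLt]
  -- RHS
  have hfilter : ∀ k : Fin n,
      Finset.univ.filter (fun j => σ⁻¹ j < σ⁻¹ (σ k))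
        = (Finset.univ.filter (fun m : Fin n => (m : ℕ) < (k : ℕ))).image σ := by
    intro k
    ext j
    simp only [Finset.mem_filter, Finset.mem_image, Finset.mem_univ, true_and]
    constructor
    · intro hj
      rw [Equiv.Perm.inv_apply_self] at hj
      exact ⟨σ⁻¹ j, Fin.lt_def.mp hj, Equiv.Perm.apply_inv_self σ j⟩
    · rintro ⟨m, hm, rfl⟩
      rw [Equiv.Perm.inv_apply_self, Equiv.Perm.inv_apply_self]
      exact Fin.lt_def.mpr hm
  have hR2 : ∑ i, y i * (p i * ∏ j ∈ Finset.univ.filter (fun j => σ⁻¹ j < σ⁻¹ i), (1 - p j))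
      = ∑ k ∈ range n, ye k * (pe k * G k) := by
    rw [← Equiv.sum_comp σ
      (fun i => y i * (p i * ∏ j ∈ Finset.univ.filter (fun j => σ⁻¹ j < σ⁻¹ i), (1 - p j))),
      ← Fin.sum_univ_eq_sum_range (fun k => ye k * (pe k * G k))]
    refine Finset.sum_congr rfl fun k _ => ?_
    have h1 : ∏ j ∈ Finset.univ.filter (fun j => σ⁻¹ j < σ⁻¹ (σ k)), (1 - p j)
        = ∏ m ∈ range (k : ℕ), (1 - pe m) := by
      rw [hfilter k, Finset.prod_image (fun a _ b _ h => σ.injective h),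
        bridge_prod (k : ℕ) k.isLt.le (fun m => 1 - p (σ m))]
      refine Finset.prod_congr rfl fun m hm => ?_
      have hmn : m < n := lt_trans (Finset.mem_range.mp hm) k.isLt
      simp [hpe, hmn]
    rw [h1]
    simp [hye, hpe, hG, k.isLt]
  rw [hL, hR2]
  -- partial-sum bounds from the constraint
  have hD : ∀ k, k ≤ n → R k ≤ 1 - G k := by
    intro k hk
    have := hcon ((Finset.univ.filter (fun m : Fin n => (m : ℕ) < k)).image σ)
    rw [Finset.sum_image (fun a _ b _ h => σ.injective h),
      Finset.prod_image (fun a _ b _ h => σ.injective h),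
      bridge_sum k hk (fun m => r (σ m)), bridge_prod k hk (fun m => 1 - p (σ m))] at this
    have e1 : ∑ m ∈ range k, (if h : m < n then r (σ ⟨m, h⟩) else 0) = R k := by
      exact Finset.sum_congr rfl fun m hm => by
        have : m < n := lt_of_lt_of_le (Finset.mem_range.mp hm) hk
        simp [hre, this]
    have e2 : ∏ m ∈ range k, (if h : m < n then 1 - p (σ ⟨m, h⟩) else 1) = G k := by
      refine Finset.prod_congr rfl fun m hm => ?_
      have : m < n := lt_of_lt_of_le (Finset.mem_range.mp hm) hk
      simp [hpe, this]
    rw [e1, e2] at this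
    exact this
  -- Abel summation
  have key : 0 ≤ ∑ k ∈ range n, ye k * (((1 - G (k + 1)) - R (k + 1)) - ((1 - G k) - R k)) := by
    refine abel_nonneg n ye (fun k => (1 - G k) - R k) (by simp [hye]) (by simp [hG, hR]) ?_ ?_
    · intro k hk
      show ye (k + 1) ≤ ye k
      by_cases h1 : k + 1 < n
      · have h2 := hanti ⟨k, hk⟩ ⟨k + 1, h1⟩ (Fin.mk_le_mk.mpr (Nat.le_succ k))
        simp only [hye]
        rw [dif_pos h1, dif_pos hk]
        exact h2
      · have h2 := hy (σ ⟨k, hk⟩)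
        simp only [hye]
        rw [dif_neg h1, dif_pos hk]
        exact h2
    · intro k hk
      have := hD k hk
      show 0 ≤ (1 - G k) - R k
      linarith
  have hterm : ∀ k ∈ range n,
      ye k * (((1 - G (k + 1)) - R (k + 1)) - ((1 - G k) - R k))
        = ye k * (pe k * G k) - ye k * re k := by
    intro k _
    have hG1 : G (k + 1) = G k * (1 - pe k) := by simp [hG, Finset.prod_range_succ]
    have hR1 : R (k + 1) = R k + re k := by simp [hR, Finset.sum_range_succ]
    rw [hG1, hR1]; ring
  rw [Finset.sum_congr rfl hterm, Finset.sum_sub_distrib] at key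
  linarith

end
open Finset Pointwise


/-- **Sampling lemma (Lemma 1).** If the targets `r i` satisfy
`∑_{i∈S} r i ≤ 1 - ∏_{i∈S} (1 - p i)` for every subset `S`, then there is a
probability distribution on permutations such that each event `i` is the
earliest occurring one with probability at least `r i`. -/
theorem stmt_0 (n : ℕ) (hn : 0 < n) (p r : Fin n → ℝ)
    (hp : ∀ i, p i ∈ Set.Icc (0 : ℝ) 1) (hr : ∀ i, 0 ≤ r i)
    (hcon : ∀ S : Finset (Fin n), ∑ i ∈ S, r i ≤ 1 - ∏ i ∈ S, (1 - p i)) :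
    ∃ w : Equiv.Perm (Fin n) → ℝ,
      (∀ π, 0 ≤ w π) ∧ (∑ π : Equiv.Perm (Fin n), w π = 1) ∧
      ∀ i : Fin n,
        r i ≤ ∑ π : Equiv.Perm (Fin n),
          w π * (p i * ∏ j ∈ Finset.univ.filter (fun j => π j < π i), (1 - p j)) := by
  classical
  set P := Equiv.Perm (Fin n)
  set Q : P → Fin n → ℝ :=
    fun π i => p i * ∏ j ∈ Finset.univ.filter (fun j => π j < π i), (1 - p j) with hQ
  set T : (P → ℝ) →ₗ[ℝ] (Fin n → ℝ) :=
    { toFun := fun w i => ∑ π : P, w π * Q π i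
      map_add' := by
        intro a b; funext i
        simp [add_mul, Finset.sum_add_distrib]
      map_smul' := by
        intro c a; funext i
        simp [Finset.mul_sum, mul_assoc] } with hT
  set S : Set (Fin n → ℝ) := T '' stdSimplex ℝ P with hS
  set C : Set (Fin n → ℝ) := {v | ∀ i, v i ≤ 0} with hC
  -- basic facts
  have hTcont : Continuous T := by
    refine continuous_pi fun i => ?_
    exact continuous_finset_sum _ fun π _ => ((continuous_apply π).mul continuous_const)
  have hScomp : IsCompact S := ((isCompact_stdSimplex ℝ _).image hTcont)
  have hSconv : Convex ℝ S := (convex_stdSimplex ℝ _).linear_image T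
  have hCclosed : IsClosed C := by
    have : C = ⋂ i, {v : Fin n → ℝ | v i ≤ 0} := by
      ext v; simp [hC, Set.mem_iInter]
    rw [this]
    exact isClosed_iInter fun i => isClosed_le (continuous_apply i) continuous_const
  have hCconv : Convex ℝ C := by
    intro x hx v hv a b ha hb hab i
    have := add_nonpos (mul_nonpos_of_nonneg_of_nonpos ha (hx i))
      (mul_nonpos_of_nonneg_of_nonpos hb (hv i))
    simpa using this
  have hKclosed : IsClosed (S + C) := hCclosed.add_left_of_isCompact hScomp
  have hKconv : Convex ℝ (S + C) := hSconv.add hCconv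
  -- the key membership
  have hrK : r ∈ S + C := by
    by_contra hrK
    obtain ⟨f, u, hfu, hur⟩ := geometric_hahn_banach_closed_point hKconv hKclosed hrK
    set e : Fin n → (Fin n → ℝ) := fun i j => if i = j then 1 else 0 with he
    set y : Fin n → ℝ := fun i => f (e i) with hy'
    have hfx : ∀ x : Fin n → ℝ, f x = ∑ i, x i * y i := by
      intro x
      conv_lhs => rw [pi_eq_sum_univ x]
      rw [map_sum]
      exact Finset.sum_congr rfl fun i _ => by rw [map_smul]; simp [hy', he, smul_eq_mul]
    -- members of S + C
    have hmemS : ∀ w ∈ stdSimplex ℝ P, T w ∈ S + C := by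
      intro w hw
      have : (T w) + 0 ∈ S + C := Set.add_mem_add ⟨w, hw, rfl⟩ (by intro i; simp)
      simpa using this
    -- y is nonnegative
    have hy : ∀ i, 0 ≤ y i := by
      intro i
      by_contra hyi
      push_neg at hyi
      set w₀ : P → ℝ := fun π => if π = 1 then 1 else 0 with hw₀
      have hw₀mem : w₀ ∈ stdSimplex ℝ P := by
        constructor
        · intro π; by_cases h : π = 1 <;> simp [hw₀, h]
        · rw [Finset.sum_eq_single (1 : P) (fun b _ hb => by simp [hw₀, hb]) (by simp)]; simp [hw₀]
      set t : ℝ := max 0 ((u - f (T w₀)) / (-y i) + 1) with ht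
      have hte : 0 ≤ t := le_max_left _ _
      have hmem : T w₀ + (-t) • e i ∈ S + C := by
        refine Set.add_mem_add ⟨w₀, hw₀mem, rfl⟩ ?_
        intro j
        simp only [he, Pi.smul_apply, smul_eq_mul]
        by_cases h : i = j <;> simp [h] <;> linarith
      have hlt := hfu _ hmem
      rw [map_add, map_smul] at hlt
      have h1 : (u - f (T w₀)) / (-y i) < t :=
        lt_of_lt_of_le (lt_add_one _) (le_max_right _ _)
      have h2 : u - f (T w₀) < t * (-y i) := (div_lt_iff₀ (by linarith)).mp h1
      have : f (T w₀) + (-t) • (f (e i)) = f (T w₀) + t * (-y i) := by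
        simp only [smul_eq_mul, hy']; ring
      rw [this] at hlt
      linarith
    -- greedy contradiction
    obtain ⟨π, hπ⟩ := greedy_perm p r hcon y hy
    have hQmem : Q π ∈ S + C := by
      set δ : P → ℝ := fun π' => if π' = π then 1 else 0 with hδ
      have hδmem : δ ∈ stdSimplex ℝ P := by
        constructor
        · intro π'; by_cases h : π' = π <;> simp [hδ, h]
        · rw [Finset.sum_eq_single π (fun b _ hb => by simp [hδ, hb]) (by simp)]; simp [hδ]
      have hTδ : T δ = Q π := by
        funext i
        show (∑ π' : P, δ π' * Q π' i) = Q π i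
        rw [Finset.sum_eq_single π (fun b _ hb => by simp [hδ, hb]) (by simp)]
        simp [hδ]
      rw [← hTδ]
      exact hmemS δ hδmem
    have hlt := hfu _ hQmem
    rw [hfx (Q π)] at hlt
    rw [hfx r] at hur
    have e1 : ∑ i, (Q π) i * y i = ∑ i, y i * (p i * ∏ j ∈ Finset.univ.filter
        (fun j => π j < π i), (1 - p j)) := Finset.sum_congr rfl fun i _ => by rw [hQ]; ring
    have e2 : ∑ i, r i * y i = ∑ i, y i * r i :=
      Finset.sum_congr rfl fun i _ => by ring
    rw [e1] at hlt
    rw [e2] at hur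
    linarith
  -- extract the witness
  obtain ⟨a, ⟨w, hw, rfl⟩, v, hv, hsum⟩ := hrK
  refine ⟨w, hw.1, hw.2, fun i => ?_⟩
  have := congrFun hsum i
  have hvi := hv i
  show r i ≤ ∑ π : P, w π * Q π i
  have hTi : (T w) i = ∑ π : P, w π * Q π i := rfl
  simp only [Pi.add_apply] at this
  rw [← this, hTi] at *
  linarith [congrFun hsum i]
end

section
/- Let n be a positive integer, let p_1, …, p_n ∈ [0,1] be real numbers, and let w be any probability distribution on the permutations π of {1, …, n} (i.e. w(π) ≥ 0 and ∑_π w(π) = 1). Then for every subset S ⊆ {1, …, n}, ∑_{i∈S} ∑_π w(π) · p_i · ∏_{j : π(j) < π(i)} (1 − p_j) ≤ 1 − ∏_{i∈S} (1 − p_i). -/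
open Finset

lemma tele_aux (n : ℕ) (p : Fin n → ℝ) (π : Equiv.Perm (Fin n)) (S : Finset (Fin n)) :
    ∑ i ∈ S, p i * ∏ j ∈ S.filter (fun j => π j < π i), (1 - p j)
      = 1 - ∏ i ∈ S, (1 - p i) := by
  induction S using Finset.induction_on_max_value (fun i => π i) with
  | empty => simp
  | insert a s ha hmax ih =>
    have hlt : ∀ x ∈ s, π x < π a := by
      intro x hx
      refine lt_of_le_of_ne (hmax x hx) ?_
      intro h
      exact ha (by simpa [π.injective h] using hx)
    rw [Finset.sum_insert ha]
    have h1 : (insert a s).filter (fun j => π j < π a) = s := by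
      ext j
      simp only [mem_filter, mem_insert]
      constructor
      · rintro ⟨h | h, hlt'⟩
        · exact absurd hlt' (by simp [h])
        · exact h
      · exact fun h => ⟨Or.inr h, hlt j h⟩
    have h2 : ∀ i ∈ s, (insert a s).filter (fun j => π j < π i)
        = s.filter (fun j => π j < π i) := by
      intro i hi
      ext j
      simp only [mem_filter, mem_insert]
      constructor
      · rintro ⟨h | h, hlt'⟩
        · exact absurd hlt' (by simp [h, not_lt.2 (le_of_lt (hlt i hi))])
        · exact ⟨h, hlt'⟩
      · exact fun ⟨h, h'⟩ => ⟨Or.inr h, h'⟩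
    rw [h1, Finset.sum_congr rfl (fun i hi => by rw [h2 i hi]), ih,
      Finset.prod_insert ha]
    ring

/-- Necessity direction of the sampling lemma: for any probability distribution
on permutations, the probability that the earliest occurring event lies in `S`
is at most the probability that at least one event of `S` occurs. -/
theorem stmt_1 (n : ℕ) (hn : 0 < n) (p : Fin n → ℝ)
    (hp : ∀ i, p i ∈ Set.Icc (0 : ℝ) 1)
    (w : Equiv.Perm (Fin n) → ℝ) (hw : ∀ π, 0 ≤ w π)
    (hw1 : ∑ π : Equiv.Perm (Fin n), w π = 1) :
    ∀ S : Finset (Fin n),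
      ∑ i ∈ S, ∑ π : Equiv.Perm (Fin n),
          w π * (p i * ∏ j ∈ Finset.univ.filter (fun j => π j < π i), (1 - p j))
        ≤ 1 - ∏ i ∈ S, (1 - p i) := by
  intro S
  rw [Finset.sum_comm]
  have key : ∀ π : Equiv.Perm (Fin n),
      ∑ i ∈ S, p i * ∏ j ∈ Finset.univ.filter (fun j => π j < π i), (1 - p j)
        ≤ 1 - ∏ i ∈ S, (1 - p i) := by
    intro π
    rw [← tele_aux n p π S]
    refine Finset.sum_le_sum (fun i hi => ?_)
    refine mul_le_mul_of_nonneg_left ?_ (hp i).1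
    have hsub : S.filter (fun j => π j < π i) ⊆
        Finset.univ.filter (fun j => π j < π i) := by
      intro j hj
      simp only [mem_filter] at hj ⊢
      exact ⟨mem_univ j, hj.2⟩
    rw [← Finset.prod_sdiff hsub]
    have h1 : ∏ j ∈ (Finset.univ.filter (fun j => π j < π i)) \
        (S.filter (fun j => π j < π i)), (1 - p j) ≤ 1 :=
      Finset.prod_le_one (fun j _ => by linarith [(hp j).2])
        (fun j _ => by linarith [(hp j).1])
    have h2 : (0:ℝ) ≤ ∏ j ∈ S.filter (fun j => π j < π i), (1 - p j) :=
      Finset.prod_nonneg (fun j _ => by linarith [(hp j).2])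
    nlinarith
  calc ∑ π : Equiv.Perm (Fin n), ∑ i ∈ S,
        w π * (p i * ∏ j ∈ Finset.univ.filter (fun j => π j < π i), (1 - p j))
      = ∑ π : Equiv.Perm (Fin n), w π *
        ∑ i ∈ S, p i * ∏ j ∈ Finset.univ.filter (fun j => π j < π i), (1 - p j) := by
        simp [Finset.mul_sum]
    _ ≤ ∑ π : Equiv.Perm (Fin n), w π * (1 - ∏ i ∈ S, (1 - p i)) :=
        Finset.sum_le_sum (fun π _ => mul_le_mul_of_nonneg_left (key π) (hw π))
    _ = 1 - ∏ i ∈ S, (1 - p i) := by rw [← Finset.sum_mul, hw1, one_mul]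
end

section
/- Let n be a positive integer and let p_1, …, p_n ∈ [0,1] be real numbers. Then for every subset S ⊆ {1, …, n}, ∑_{i∈S} p_i · ∏_{j < i} (1 − p_j) ≤ 1 − ∏_{i∈S} (1 − p_i), where the inner product is over all indices j (in {1, …, n}) with j < i. -/
/-- Telescoping identity: the sum over `S` of `p i` times the product of
`1 - p j` over earlier elements of `S` equals `1 - ∏_{i ∈ S} (1 - p i)`. -/
lemma telescope_aux (n : ℕ) (p : Fin n → ℝ) :
    ∀ S : Finset (Fin n),
      ∑ i ∈ S, p i * ∏ j ∈ S.filter (fun j => j < i), (1 - p j)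
        = 1 - ∏ i ∈ S, (1 - p i) := by
  intro S
  induction S using Finset.strongInductionOn with
  | _ S ih =>
    rcases S.eq_empty_or_nonempty with rfl | hS
    · simp
    · set m := S.min' hS with hmdef
      have hm : m ∈ S := S.min'_mem hS
      have hfm : S.filter (fun j => j < m) = ∅ := by
        apply Finset.filter_eq_empty_iff.mpr
        intro j hj
        exact not_lt.mpr (S.min'_le j hj)
      have hfi : ∀ i ∈ S.erase m,
          S.filter (fun j => j < i)
            = insert m ((S.erase m).filter (fun j => j < i)) := by
        intro i hi
        have hine : i ≠ m := (Finset.mem_erase.mp hi).1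
        have hiS : i ∈ S := (Finset.mem_erase.mp hi).2
        have hmi : m < i := lt_of_le_of_ne (S.min'_le i hiS) (Ne.symm hine)
        ext j
        simp only [Finset.mem_filter, Finset.mem_insert, Finset.mem_erase]
        constructor
        · rintro ⟨hjS, hji⟩
          by_cases hjm : j = m
          · exact Or.inl hjm
          · exact Or.inr ⟨⟨hjm, hjS⟩, hji⟩
        · rintro (rfl | ⟨⟨hjm, hjS⟩, hji⟩)
          · exact ⟨hm, hmi⟩
          · exact ⟨hjS, hji⟩
      rw [← Finset.add_sum_erase S _ hm, hfm]
      have hsum : ∑ i ∈ S.erase m, p i * ∏ j ∈ S.filter (fun j => j < i), (1 - p j)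
          = (1 - p m) * ∑ i ∈ S.erase m,
              p i * ∏ j ∈ (S.erase m).filter (fun j => j < i), (1 - p j) := by
        rw [Finset.mul_sum]
        apply Finset.sum_congr rfl
        intro i hi
        rw [hfi i hi, Finset.prod_insert (by simp)]
        ring
      rw [hsum, ih (S.erase m) (Finset.erase_ssubset hm),
        ← Finset.prod_erase_mul S _ hm]
      simp only [Finset.prod_empty]
      ring

/-- Deterministic (single-permutation) core of the necessity direction: when
events are examined in the order `1, 2, …, n`, the probability that the
earliest occurring event lies in `S` is at most the probability that at least
one event of `S` occurs. -/
theorem stmt_2 (n : ℕ) (hn : 0 < n) (p : Fin n → ℝ)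
    (hp : ∀ i, p i ∈ Set.Icc (0 : ℝ) 1) :
    ∀ S : Finset (Fin n),
      ∑ i ∈ S, p i * ∏ j ∈ Finset.univ.filter (fun j => j < i), (1 - p j)
        ≤ 1 - ∏ i ∈ S, (1 - p i) := by
  intro S
  rw [← telescope_aux n p S]
  apply Finset.sum_le_sum
  intro i hi
  have hpi := hp i
  apply mul_le_mul_of_nonneg_left _ hpi.1
  have hsub : S.filter (fun j => j < i) ⊆ Finset.univ.filter (fun j => j < i) :=
    Finset.filter_subset_filter _ (Finset.subset_univ S)
  rw [← Finset.prod_sdiff hsub]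
  have h1 : ∏ j ∈ (Finset.univ.filter (fun j => j < i)) \ S.filter (fun j => j < i),
      (1 - p j) ≤ 1 :=
    Finset.prod_le_one (fun j _ => by linarith [(hp j).2]) (fun j _ => by linarith [(hp j).1])
  have h2 : (0 : ℝ) ≤ ∏ j ∈ S.filter (fun j => j < i), (1 - p j) :=
    Finset.prod_nonneg (fun j _ => by linarith [(hp j).2])
  calc _ ≤ 1 * ∏ j ∈ S.filter (fun j => j < i), (1 - p j) :=
        mul_le_mul_of_nonneg_right h1 h2
    _ = _ := one_mul _
end

section
/- Let n be a positive integer, let p_1, …, p_n ∈ [0,1] and r_1, …, r_n ≥ 0 be real numbers satisfying, for every k ∈ {1, …, n}, the prefix constraint ∑_{i=1}^{k} r_i ≤ 1 − ∏_{j=1}^{k} (1 − p_j). Then for every sequence of real numbers x_1 ≥ x_2 ≥ … ≥ x_n ≥ 0 one has ∑_{k=1}^{n} x_k r_k ≤ ∑_{i=1}^{n} x_i p_i ∏_{j=1}^{i-1} (1 − p_j). -/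
open Finset

private lemma telesc (p : ℕ → ℝ) (m : ℕ) :
    ∑ k ∈ range m, p k * ∏ j ∈ range k, (1 - p j)
      = 1 - ∏ j ∈ range m, (1 - p j) := by
  induction m with
  | zero => simp
  | succ m ih => rw [sum_range_succ, prod_range_succ, ih]; ring

private lemma keyNat (p r : ℕ → ℝ) :
    ∀ (n : ℕ) (x : ℕ → ℝ),
      (∀ k, k < n → ∑ i ∈ range (k+1), r i ≤ 1 - ∏ j ∈ range (k+1), (1 - p j)) →
      (∀ i j, i ≤ j → j < n → x j ≤ x i) →
      (∀ i, i < n → 0 ≤ x i) →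
      ∑ k ∈ range n, x k * r k
        ≤ ∑ k ∈ range n, x k * (p k * ∏ j ∈ range k, (1 - p j)) := by
  intro n
  induction n with
  | zero => simp
  | succ n ih =>
    intro x hpre hmono hnonneg
    set q : ℕ → ℝ := fun k => p k * ∏ j ∈ range k, (1 - p j) with hq
    set y : ℕ → ℝ := fun k => x k - x n with hy
    have e1 : ∀ f : ℕ → ℝ,
        ∑ k ∈ range n, y k * f k
          = ∑ k ∈ range n, x k * f k - x n * ∑ k ∈ range n, f k := by
      intro f
      simp only [hy, sub_mul]
      rw [sum_sub_distrib, mul_sum]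
    have hIH : ∑ k ∈ range n, y k * r k ≤ ∑ k ∈ range n, y k * q k := by
      apply ih
      · intro k hk; exact hpre k (hk.trans (Nat.lt_succ_self n))
      · intro i j hij hj
        simp only [hy]
        have := hmono i j hij (hj.trans (Nat.lt_succ_self n))
        linarith
      · intro i hi
        simp only [hy]
        have := hmono i n (Nat.le_of_lt hi) (Nat.lt_succ_self n)
        linarith
    have hxn : 0 ≤ x n := hnonneg n (Nat.lt_succ_self n)
    have h2 : x n * ∑ k ∈ range (n+1), r k ≤ x n * ∑ k ∈ range (n+1), q k := by
      apply mul_le_mul_of_nonneg_left _ hxn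
      rw [hq, telesc p (n+1)]
      exact hpre n (Nat.lt_succ_self n)
    have lhs_eq : ∑ k ∈ range (n+1), x k * r k
        = ∑ k ∈ range n, y k * r k + x n * ∑ k ∈ range (n+1), r k := by
      rw [e1 r, sum_range_succ (fun k => x k * r k), sum_range_succ r]
      ring
    have rhs_eq : ∑ k ∈ range (n+1), x k * q k
        = ∑ k ∈ range n, y k * q k + x n * ∑ k ∈ range (n+1), q k := by
      rw [e1 q, sum_range_succ (fun k => x k * q k), sum_range_succ q]
      ring
    calc ∑ k ∈ range (n+1), x k * r k
        = ∑ k ∈ range n, y k * r k + x n * ∑ k ∈ range (n+1), r k := lhs_eq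
      _ ≤ ∑ k ∈ range n, y k * q k + x n * ∑ k ∈ range (n+1), q k := by
          exact add_le_add hIH h2
      _ = ∑ k ∈ range (n+1), x k * q k := rhs_eq.symm

/-- Key inequality in the LP proof of the sampling lemma: under the prefix
feasibility constraints, for nonnegative weights `x` sorted in decreasing
order, the value of the identity permutation dominates the weighted sum of the
targets. -/
theorem stmt_3 (n : ℕ) (hn : 0 < n) (p r x : Fin n → ℝ)
    (hp : ∀ i, p i ∈ Set.Icc (0 : ℝ) 1) (hr : ∀ i, 0 ≤ r i)
    (hpre : ∀ k : Fin n,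
      ∑ i ∈ Finset.univ.filter (fun i => i ≤ k), r i
        ≤ 1 - ∏ j ∈ Finset.univ.filter (fun j => j ≤ k), (1 - p j))
    (hxmono : ∀ i j : Fin n, i ≤ j → x j ≤ x i) (hxnonneg : ∀ i, 0 ≤ x i) :
    ∑ k, x k * r k
      ≤ ∑ i, x i * p i * ∏ j ∈ Finset.univ.filter (fun j => j < i), (1 - p j) := by
  set P : ℕ → ℝ := fun i => if h : i < n then p ⟨i, h⟩ else 0 with hP
  set R : ℕ → ℝ := fun i => if h : i < n then r ⟨i, h⟩ else 0 with hR
  set X : ℕ → ℝ := fun i => if h : i < n then x ⟨i, h⟩ else 0 with hX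
  have hPv : ∀ i : Fin n, P i.val = p i := by intro i; simp [hP, i.isLt]
  have hRv : ∀ i : Fin n, R i.val = r i := by intro i; simp [hR, i.isLt]
  have hXv : ∀ i : Fin n, X i.val = x i := by intro i; simp [hX, i.isLt]
  have filt_le : ∀ m, m < n → (range n).filter (fun i => i ≤ m) = range (m+1) := by
    intro m hm; ext a; simp; omega
  have filt_lt : ∀ m, m ≤ n → (range n).filter (fun i => i < m) = range m := by
    intro m hm; ext a; simp; omega
  -- prefix sums over Fin translate to range sums
  have sum_le : ∀ (f : ℕ → ℝ) (k : Fin n),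
      ∑ i ∈ Finset.univ.filter (fun i : Fin n => i ≤ k), f i.val
        = ∑ i ∈ range (k.val+1), f i := by
    intro f k
    rw [Finset.sum_filter]
    simp only [Fin.le_def]
    rw [Fin.sum_univ_eq_sum_range (fun i => if i ≤ k.val then f i else 0) n]
    rw [← Finset.sum_filter, filt_le k.val k.isLt]
  have prod_le : ∀ (f : ℕ → ℝ) (k : Fin n),
      ∏ j ∈ Finset.univ.filter (fun j : Fin n => j ≤ k), f j.val
        = ∏ j ∈ range (k.val+1), f j := by
    intro f k
    rw [Finset.prod_filter]
    simp only [Fin.le_def]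
    rw [Fin.prod_univ_eq_prod_range (fun j => if j ≤ k.val then f j else 1) n]
    rw [← Finset.prod_filter, filt_le k.val k.isLt]
  have prod_lt : ∀ (f : ℕ → ℝ) (k : Fin n),
      ∏ j ∈ Finset.univ.filter (fun j : Fin n => j < k), f j.val
        = ∏ j ∈ range k.val, f j := by
    intro f k
    rw [Finset.prod_filter]
    simp only [Fin.lt_def]
    rw [Fin.prod_univ_eq_prod_range (fun j => if j < k.val then f j else 1) n]
    rw [← Finset.prod_filter, filt_lt k.val (Nat.le_of_lt k.isLt)]
  have key := keyNat P R n X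
    (by
      intro k hk
      have hpk := hpre ⟨k, hk⟩
      have e1 : ∑ i ∈ Finset.univ.filter (fun i : Fin n => i ≤ ⟨k, hk⟩), r i
          = ∑ i ∈ range (k+1), R i := by
        rw [← sum_le R ⟨k, hk⟩]
        exact Finset.sum_congr rfl (fun i _ => (hRv i).symm)
      have e2 : ∏ j ∈ Finset.univ.filter (fun j : Fin n => j ≤ ⟨k, hk⟩), (1 - p j)
          = ∏ j ∈ range (k+1), (1 - P j) := by
        rw [← prod_le (fun j => 1 - P j) ⟨k, hk⟩]
        exact Finset.prod_congr rfl (fun j _ => by rw [hPv j])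
      rw [← e1, ← e2]; exact hpk)
    (by
      intro i j hij hj
      simp only [hX]
      have hi : i < n := lt_of_le_of_lt hij hj
      simp only [hi, hj, dif_pos]
      exact hxmono ⟨i, hi⟩ ⟨j, hj⟩ hij)
    (by
      intro i hi
      simp only [hX, hi, dif_pos]
      exact hxnonneg ⟨i, hi⟩)
  calc ∑ k, x k * r k
      = ∑ k ∈ range n, X k * R k := by
        rw [← Fin.sum_univ_eq_sum_range (fun k => X k * R k) n]
        exact Finset.sum_congr rfl (fun k _ => by rw [hXv k, hRv k])
    _ ≤ ∑ k ∈ range n, X k * (P k * ∏ j ∈ range k, (1 - P j)) := key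
    _ = ∑ i, x i * p i * ∏ j ∈ Finset.univ.filter (fun j => j < i), (1 - p j) := by
        rw [← Fin.sum_univ_eq_sum_range
          (fun k => X k * (P k * ∏ j ∈ range k, (1 - P j))) n]
        refine Finset.sum_congr rfl (fun k _ => ?_)
        have hpr : ∏ j ∈ Finset.univ.filter (fun j => j < k), (1 - p j)
            = ∏ j ∈ range k.val, (1 - P j) := by
          rw [← prod_lt (fun j => 1 - P j) k]
          exact Finset.prod_congr rfl (fun j _ => by rw [hPv j])
        rw [hXv k, hPv k, hpr, mul_assoc]
end

section
/- Let n be a positive integer and let x_1, …, x_n and p_1, …, p_n be arbitrary real numbers. Then ∑_{i=1}^{n} x_i p_i ∏_{j=1}^{i-1} (1 − p_j) = ∑_{S ⊆ {1,…,n}, S ≠ ∅} (−1)^{|S|−1} x_{max(S)} ∏_{i∈S} p_i, where max(S) denotes the largest element of S. -/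
open Finset

/-- Algebraic identity from the proof of the sampling lemma: the value of the
identity permutation equals an inclusion–exclusion-type sum over nonempty
subsets of `{1, …, n}`. -/
theorem stmt_4 (n : ℕ) (hn : 0 < n) (x p : ℕ → ℝ) :
    ∑ i ∈ Finset.Icc 1 n, x i * p i * ∏ j ∈ Finset.Icc 1 (i - 1), (1 - p j)
      = ∑ S ∈ ((Finset.Icc 1 n).powerset.filter (fun S => S.Nonempty)).attach,
          (-1 : ℝ) ^ (S.1.card - 1) * x (S.1.max' (Finset.mem_filter.mp S.2).2)
            * ∏ i ∈ S.1, p i := by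
  set g : Finset ℕ → ℝ := fun S =>
    (-1 : ℝ) ^ (S.card - 1) * x (WithBot.unbotD 0 (S.max)) * ∏ i ∈ S, p i with hg
  have hmem : ∀ {S : Finset ℕ}, S.Nonempty → (WithBot.unbotD 0 (S.max)) ∈ S := by
    intro S hne
    have h1 : S.max = (S.max' hne : WithBot ℕ) := (Finset.coe_max' hne).symm
    rw [h1]
    simpa using Finset.max'_mem S hne
  have hRHS : ∑ S ∈ ((Finset.Icc 1 n).powerset.filter (fun S => S.Nonempty)).attach,
          (-1 : ℝ) ^ (S.1.card - 1) * x (S.1.max' (Finset.mem_filter.mp S.2).2)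
            * ∏ i ∈ S.1, p i
      = ∑ S ∈ (Finset.Icc 1 n).powerset.filter (fun S => S.Nonempty), g S := by
    rw [← Finset.sum_attach ((Finset.Icc 1 n).powerset.filter (fun S => S.Nonempty)) g]
    refine Finset.sum_congr rfl fun S _ => ?_
    have hne : S.1.Nonempty := (Finset.mem_filter.mp S.2).2
    have h1 : S.1.max = (S.1.max' hne : WithBot ℕ) := (Finset.coe_max' hne).symm
    have h2 : WithBot.unbotD 0 (S.1.max) = S.1.max' hne := by rw [h1]; rfl
    simp [hg, h2]
  rw [hRHS]
  have key : ∑ S ∈ (Finset.Icc 1 n).powerset.filter (fun S => S.Nonempty), g S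
      = ∑ a ∈ (Finset.Icc 1 n).sigma (fun i => (Finset.Icc 1 (i - 1)).powerset),
          g (insert a.1 a.2) := by
    refine Finset.sum_nbij' (fun S => (⟨WithBot.unbotD 0 (S.max), S.erase (WithBot.unbotD 0 (S.max))⟩ :
        (i : ℕ) × Finset ℕ)) (fun a => insert a.1 a.2) ?_ ?_ ?_ ?_ ?_
    · intro S hS
      simp only [Finset.mem_filter, Finset.mem_powerset] at hS
      obtain ⟨hsub, hne⟩ := hS
      set m := WithBot.unbotD 0 (S.max) with hm
      have hmS : m ∈ S := hmem hne
      simp only [Finset.mem_sigma, Finset.mem_powerset]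
      refine ⟨hsub hmS, fun y hy => ?_⟩
      have hyS : y ∈ S := Finset.mem_of_mem_erase hy
      have hyne : y ≠ m := Finset.ne_of_mem_erase hy
      have hle : y ≤ m := by
        have h1 : S.max = (S.max' hne : WithBot ℕ) := (Finset.coe_max' hne).symm
        have h2 : m = S.max' hne := by rw [hm, h1]; rfl
        have h3 := Finset.le_max hyS
        rw [h1] at h3
        rw [h2]
        exact WithBot.coe_le_coe.mp h3
      have h1y : 1 ≤ y := (Finset.mem_Icc.mp (hsub hyS)).1
      exact Finset.mem_Icc.mpr ⟨h1y, Nat.le_sub_one_of_lt (lt_of_le_of_ne hle hyne)⟩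
    · intro a ha
      simp only [Finset.mem_sigma, Finset.mem_powerset] at ha
      simp only [Finset.mem_filter, Finset.mem_powerset]
      refine ⟨Finset.insert_subset ha.1 (ha.2.trans ?_), Finset.insert_nonempty _ _⟩
      intro y hy
      have han := (Finset.mem_Icc.mp ha.1).2
      simp only [Finset.mem_Icc] at hy ⊢
      omega
    · intro S hS
      simp only [Finset.mem_filter, Finset.mem_powerset] at hS
      exact Finset.insert_erase (hmem hS.2)
    · intro a ha
      simp only [Finset.mem_sigma, Finset.mem_powerset] at ha
      have h1a : 1 ≤ a.1 := (Finset.mem_Icc.mp ha.1).1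
      have hnot : a.1 ∉ a.2 := fun h => by
        have := (Finset.mem_Icc.mp (ha.2 h)).2
        omega
      have hmax : (insert a.1 a.2).max = (WithBot.some a.1) := by
        rw [Finset.max_insert]
        rcases Finset.eq_empty_or_nonempty a.2 with h | h
        · simp [h]
        · have h2 : a.2.max = (a.2.max' h : WithBot ℕ) := (Finset.coe_max' h).symm
          rw [h2]
          have hlt : a.2.max' h < a.1 := by
            have := (Finset.mem_Icc.mp (ha.2 (Finset.max'_mem a.2 h))).2
            omega
          exact max_eq_left (le_of_lt (WithBot.coe_lt_coe.mpr hlt))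
      have hm' : WithBot.unbotD 0 ((insert a.1 a.2).max) = a.1 := by rw [hmax]; rfl
      obtain ⟨i, T⟩ := a
      simp only at hm' hnot ⊢
      rw [hm', Finset.erase_insert hnot]
    · intro S hS
      simp only [Finset.mem_filter, Finset.mem_powerset] at hS
      rw [Finset.insert_erase (hmem hS.2)]
  rw [key, Finset.sum_sigma]
  refine Finset.sum_congr rfl fun i hi => ?_
  have h1i : 1 ≤ i := (Finset.mem_Icc.mp hi).1
  have hnot : ∀ T ∈ (Finset.Icc 1 (i-1)).powerset, i ∉ T := by
    intro T hT h
    have := (Finset.mem_Icc.mp (Finset.mem_powerset.mp hT h)).2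
    omega
  have hmax : ∀ T ∈ (Finset.Icc 1 (i-1)).powerset, (insert i T).max = (WithBot.some i) := by
    intro T hT
    rw [Finset.max_insert]
    rcases Finset.eq_empty_or_nonempty T with h | h
    · simp [h]
    · have h2 : T.max = (T.max' h : WithBot ℕ) := (Finset.coe_max' h).symm
      rw [h2]
      have hlt : T.max' h < i := by
        have := (Finset.mem_Icc.mp (Finset.mem_powerset.mp hT (Finset.max'_mem T h))).2
        omega
      exact max_eq_left (le_of_lt (WithBot.coe_lt_coe.mpr hlt))
  calc x i * p i * ∏ j ∈ Finset.Icc 1 (i - 1), (1 - p j)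
      = x i * p i * ∑ T ∈ (Finset.Icc 1 (i-1)).powerset, (-1 : ℝ) ^ T.card * ∏ j ∈ T, p j := by
        congr 1
        have h3 := Finset.prod_add (fun j => (-p j : ℝ)) (fun _ => (1:ℝ)) (Finset.Icc 1 (i-1))
        simp only [Finset.prod_const_one, mul_one] at h3
        rw [show (fun j => (1 : ℝ) - p j) = fun j => -p j + 1 by ext j; ring] at *
        rw [h3]
        refine Finset.sum_congr rfl fun T _ => ?_
        calc ∏ j ∈ T, (-p j) = ∏ j ∈ T, ((-1 : ℝ) * p j) :=
              Finset.prod_congr rfl fun j _ => by ring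
          _ = (-1 : ℝ) ^ T.card * ∏ j ∈ T, p j := by
              rw [Finset.prod_mul_distrib, Finset.prod_const]
    _ = ∑ T ∈ (Finset.Icc 1 (i-1)).powerset, g (insert i T) := by
        rw [Finset.mul_sum]
        refine Finset.sum_congr rfl fun T hT => ?_
        have hni := hnot T hT
        have hm' : WithBot.unbotD 0 ((insert i T).max) = i := by rw [hmax T hT]; rfl
        simp only [hg, hm', Finset.card_insert_of_notMem hni,
          Finset.prod_insert hni, Nat.add_sub_cancel]
        ring
end

section
/- Let n be a positive integer, let α > 0, let p_1, …, p_n ∈ [0,1], and let q_1, …, q_n ≥ 0 be real numbers with q_i ≤ α · p_i for every i. Suppose Q := ∑_{i=1}^{n} q_i > 0, and set δ := (1 − exp(−Q/α)) / Q. Then for every nonempty subset S ⊆ {1, …, n}, 1 − ∏_{i∈S} (1 − p_i) ≥ δ · ∑_{i∈S} q_i. -/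
lemma aux_concave : ConcaveOn ℝ Set.univ (fun x : ℝ => 1 - Real.exp (-x)) := by
  have h1 : ConvexOn ℝ Set.univ (fun x : ℝ => Real.exp (-x)) := by
    have := convexOn_exp.comp_affineMap (-(AffineMap.id ℝ ℝ))
    simpa [Function.comp_def, Pi.neg_apply, id] using this
  have h2 : ConcaveOn ℝ Set.univ (fun _ : ℝ => (1 : ℝ)) := concaveOn_const 1 convex_univ
  exact h2.sub h1

lemma aux_mono (a b : ℝ) (ha : 0 ≤ a) (hab : a ≤ b) (hb : 0 < b) :
    (1 - Real.exp (-b)) / b * a ≤ 1 - Real.exp (-a) := by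
  have hw : (0:ℝ) ≤ 1 - a / b := by
    have : a / b ≤ 1 := (div_le_one hb).2 hab
    linarith
  have key := aux_concave.2 (Set.mem_univ b) (Set.mem_univ (0:ℝ))
    (div_nonneg ha hb.le) hw (by ring)
  simp only [smul_eq_mul, mul_zero, add_zero, Real.exp_zero, neg_zero] at key
  have : a / b * b = a := div_mul_cancel₀ a hb.ne'
  rw [this] at key
  calc (1 - Real.exp (-b)) / b * a = a / b * (1 - Real.exp (-b)) := by ring
    _ ≤ 1 - Real.exp (-a) := by linarith

/-- Feasibility of the scaled targets in the proof of Corollary 1: for every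
nonempty subset `S`, `1 - ∏_{i∈S} (1 - p i) ≥ δ · ∑_{i∈S} q i`, where
`δ = (1 - exp (-(∑ q)/α)) / (∑ q)`. -/
theorem stmt_7 (n : ℕ) (hn : 0 < n) (α : ℝ) (hα : 0 < α) (p q : Fin n → ℝ)
    (hp : ∀ i, p i ∈ Set.Icc (0 : ℝ) 1) (hq : ∀ i, 0 ≤ q i)
    (hqp : ∀ i, q i ≤ α * p i) (hQ : 0 < ∑ i, q i) :
    ∀ S : Finset (Fin n), S.Nonempty →
      (1 - Real.exp (-(∑ j, q j) / α)) / (∑ j, q j) * ∑ i ∈ S, q i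
        ≤ 1 - ∏ i ∈ S, (1 - p i) := by
  intro S hS
  set Q : ℝ := ∑ j, q j with hQdef
  set qS : ℝ := ∑ i ∈ S, q i with hqSdef
  have hqS0 : 0 ≤ qS := Finset.sum_nonneg fun i _ => hq i
  have hqSQ : qS ≤ Q := Finset.sum_le_sum_of_subset_of_nonneg (Finset.subset_univ S)
    (fun i _ _ => hq i)
  have hprod_le_one : ∏ i ∈ S, (1 - p i) ≤ 1 := by
    apply Finset.prod_le_one
    · intro i _; linarith [(hp i).2]
    · intro i _; linarith [(hp i).1]
  have hprod_le_exp : ∏ i ∈ S, (1 - p i) ≤ Real.exp (-(∑ i ∈ S, p i)) := by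
    rw [← Finset.sum_neg_distrib, Real.exp_sum]
    apply Finset.prod_le_prod
    · intro i _; linarith [(hp i).2]
    · intro i _; have := Real.add_one_le_exp (-(p i)); linarith
  have hsum_p : qS / α ≤ ∑ i ∈ S, p i := by
    rw [div_le_iff₀ hα, Finset.sum_mul]
    apply Finset.sum_le_sum
    intro i _
    calc q i ≤ α * p i := hqp i
      _ = p i * α := mul_comm _ _
  -- step 1: scaling
  have step1 : (1 - Real.exp (-Q / α)) / Q * qS ≤ 1 - Real.exp (-(qS / α)) := by
    have h := aux_mono (qS / α) (Q / α) (div_nonneg hqS0 hα.le)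
      (by gcongr) (div_pos hQ hα)
    have heq : (1 - Real.exp (-(Q / α))) / (Q / α) * (qS / α)
        = (1 - Real.exp (-Q / α)) / Q * qS := by
      rw [neg_div]
      field_simp
    rw [heq] at h
    exact h
  have step2 : 1 - Real.exp (-(qS / α)) ≤ 1 - Real.exp (-(∑ i ∈ S, p i)) := by
    have := Real.exp_le_exp.2 (neg_le_neg hsum_p)
    linarith
  linarith
end

section
/- Let n be a positive integer, let p_1, …, p_n be real numbers with 0 < p_i < 1 for all i, and let r_1, …, r_n ≥ 0 be real numbers sorted in decreasing order of the ratios r_i/p_i, i.e. r_1/p_1 ≥ r_2/p_2 ≥ … ≥ r_n/p_n. Define f(S) := ∑_{i∈S} r_i + ∏_{i∈S} (1 − p_i) for S ⊆ {1, …, n} (with the empty product equal to 1). Then there exists k ∈ {0, 1, …, n} such that f({1, 2, …, k}) ≥ f(S) for every subset S ⊆ {1, …, n}; that is, the maximum of f over all subsets is attained at a prefix set. -/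
/-- First Claim of the combinatorial algorithm (Appendix B): after sorting the
indices by decreasing ratio `r i / p i`, the quantity
`f S = ∑_{i∈S} r i + ∏_{i∈S} (1 - p i)` is always maximized by a prefix set
`{1, 2, …, k}`. -/
theorem stmt_8 (n : ℕ) (hn : 0 < n) (p r : Fin n → ℝ)
    (hp : ∀ i, 0 < p i ∧ p i < 1) (hr : ∀ i, 0 ≤ r i)
    (hsort : ∀ i j : Fin n, i ≤ j → r j / p j ≤ r i / p i) :
    ∃ k : ℕ, k ≤ n ∧
      ∀ S : Finset (Fin n),
        ∑ i ∈ S, r i + ∏ i ∈ S, (1 - p i)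
          ≤ ∑ i ∈ Finset.univ.filter (fun i : Fin n => (i : ℕ) < k), r i
            + ∏ i ∈ Finset.univ.filter (fun i : Fin n => (i : ℕ) < k), (1 - p i) := by
  classical
  set f : Finset (Fin n) → ℝ := fun S => ∑ i ∈ S, r i + ∏ i ∈ S, (1 - p i) with hf
  obtain ⟨S₀, -, hS₀⟩ := Finset.exists_max_image (Finset.univ : Finset (Finset (Fin n))) f
    Finset.univ_nonempty
  set M : Finset (Finset (Fin n)) := Finset.univ.filter (fun S => ∀ T, f T ≤ f S) with hM
  have hMne : M.Nonempty := ⟨S₀, by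
    simp only [hM, Finset.mem_filter, Finset.mem_univ, true_and]
    exact fun T => hS₀ T (Finset.mem_univ T)⟩
  obtain ⟨S, hSM, hScard⟩ := Finset.exists_max_image M Finset.card hMne
  have hSmax : ∀ T, f T ≤ f S := by
    simpa only [hM, Finset.mem_filter, Finset.mem_univ, true_and] using hSM
  have hdc : ∀ i j : Fin n, i < j → j ∈ S → i ∈ S := by
    intro i j hij hjS
    by_contra hiS
    set P := ∏ m ∈ S, (1 - p m) with hP
    have hPpos : (0:ℝ) < P := Finset.prod_pos (fun m _ => by linarith [(hp m).2])
    by_cases hcase : p i * P ≤ r i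
    · have h1 : f S ≤ f (insert i S) := by
        have he : f (insert i S) = f S + (r i - p i * P) := by
          simp only [hf, Finset.sum_insert hiS, Finset.prod_insert hiS, ← hP]
          ring
        rw [he]; linarith
      have hmem : insert i S ∈ M := by
        simp only [hM, Finset.mem_filter, Finset.mem_univ, true_and]
        exact fun T => le_trans (hSmax T) h1
      have hc := hScard _ hmem
      rw [Finset.card_insert_of_notMem hiS] at hc
      omega
    · push_neg at hcase
      have hpj := hp j
      have hpi := hp i
      have h1pj : (0:ℝ) < 1 - p j := by linarith
      have hprod : (1 - p j) * ∏ m ∈ S.erase j, (1 - p m) = P := Finset.mul_prod_erase S (fun m => 1 - p m) hjS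
      have hPe : ∏ m ∈ S.erase j, (1 - p m) = P / (1 - p j) := by
        field_simp
        linarith [hprod]
      have hsum : ∑ m ∈ S.erase j, r m = (∑ m ∈ S, r m) - r j := by
        rw [← Finset.add_sum_erase S r hjS]; ring
      have hrj : r j < p j * (P / (1 - p j)) := by
        have h1 : r j / p j ≤ r i / p i := hsort i j hij.le
        have h2 : r i / p i < P := (div_lt_iff₀ hpi.1).2 (by linarith)
        have h3 : P ≤ P / (1 - p j) := by
          rw [le_div_iff₀ h1pj]; nlinarith
        have h4 : r j / p j < P / (1 - p j) := lt_of_le_of_lt h1 (lt_of_lt_of_le h2 h3)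
        calc r j = p j * (r j / p j) := by rw [mul_div_cancel₀ _ hpj.1.ne']
          _ < p j * (P / (1 - p j)) := mul_lt_mul_of_pos_left h4 hpj.1
      have heq : p j * (P / (1 - p j)) = P / (1 - p j) - P := by
        field_simp; ring
      have hlt : f S < f (S.erase j) := by
        simp only [hf, hsum, hPe, ← hP]
        linarith
      exact absurd (hSmax (S.erase j)) (not_le.2 hlt)
  refine ⟨S.card, le_trans (Finset.card_le_univ S) (by simp), ?_⟩
  have hSeq : S = Finset.univ.filter (fun i : Fin n => (i : ℕ) < S.card) := by
    ext i
    simp only [Finset.mem_filter, Finset.mem_univ, true_and]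
    constructor
    · intro hiS
      by_contra hlt
      push_neg at hlt
      have hsub : Finset.Iic i ⊆ S := by
        intro m hm
        rw [Finset.mem_Iic] at hm
        rcases lt_or_eq_of_le hm with h | h
        · exact hdc m i h hiS
        · exact h ▸ hiS
      have := Finset.card_le_card hsub
      rw [Fin.card_Iic] at this
      omega
    · intro hik
      by_contra hiS
      have hsub : S ⊆ Finset.Iio i := by
        intro m hm
        rw [Finset.mem_Iio]
        rcases lt_trichotomy m i with h | h | h
        · exact h
        · exact absurd (h ▸ hm) hiS
        · exact absurd (hdc i m h hm) hiS
      have := Finset.card_le_card hsub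
      rw [Fin.card_Iio] at this
      omega
  intro T
  rw [← hSeq]
  exact hSmax T
end

section
/- Let n be a positive integer, let p_1, …, p_n be real numbers with 0 < p_i < 1 for all i, let r_1, …, r_n ≥ 0, and define f(S) := ∑_{i∈S} r_i + ∏_{i∈S} (1 − p_i) for S ⊆ {1, …, n}. Suppose S* ⊆ {1, …, n} maximizes f over all subsets, and suppose j₁ ∈ S* and j₂ ∉ S*. Then r_{j₂}/p_{j₂} ≤ r_{j₁}/p_{j₁}. -/
/-- Exchange inequality from Appendix B: if `S*` maximizes
`f S = ∑_{i∈S} r i + ∏_{i∈S} (1 - p i)`, then any element outside the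
maximizer has ratio `r / p` at most that of any element inside it. -/
theorem stmt_9 (n : ℕ) (hn : 0 < n) (p r : Fin n → ℝ)
    (hp : ∀ i, 0 < p i ∧ p i < 1) (hr : ∀ i, 0 ≤ r i)
    (Sstar : Finset (Fin n))
    (hmax : ∀ S : Finset (Fin n),
      ∑ i ∈ S, r i + ∏ i ∈ S, (1 - p i)
        ≤ ∑ i ∈ Sstar, r i + ∏ i ∈ Sstar, (1 - p i))
    (j₁ j₂ : Fin n) (hj₁ : j₁ ∈ Sstar) (hj₂ : j₂ ∉ Sstar) :
    r j₂ / p j₂ ≤ r j₁ / p j₁ := by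
  obtain ⟨hp1, hp1'⟩ := hp j₁
  obtain ⟨hp2, hp2'⟩ := hp j₂
  set P := ∏ i ∈ Sstar, (1 - p i) with hP
  set Q := ∏ i ∈ Sstar.erase j₁, (1 - p i) with hQ
  have hPQ : P = (1 - p j₁) * Q := (Finset.mul_prod_erase _ _ hj₁).symm
  -- lower bound: r j₂ / p j₂ ≤ P
  have h2 := hmax (insert j₂ Sstar)
  rw [Finset.sum_insert hj₂, Finset.prod_insert hj₂] at h2
  have hlow : r j₂ ≤ p j₂ * P := by nlinarith
  -- upper bound: P ≤ r j₁ * (1 - p j₁) / p j₁, so p j₁ * P ≤ r j₁ * (1 - p j₁) ≤ r j₁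
  have h1 := hmax (Sstar.erase j₁)
  have hsum : ∑ i ∈ Sstar, r i = r j₁ + ∑ i ∈ Sstar.erase j₁, r i :=
    (Finset.add_sum_erase _ _ hj₁).symm
  rw [hsum] at h1
  -- h1 : ∑ erase + Q ≤ r j₁ + ∑ erase + P
  have hQP : Q - P ≤ r j₁ := by linarith
  have hQnonneg : 0 ≤ Q := Finset.prod_nonneg fun i _ => by linarith [(hp i).2]
  have hPp : p j₁ * P ≤ r j₁ := by
    have heq : p j₁ * P = p j₁ * (1 - p j₁) * Q := by rw [hPQ]; ring
    have hpq : p j₁ * Q ≤ r j₁ := by nlinarith [hQP, hPQ]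
    nlinarith [mul_nonneg (mul_nonneg hp1.le hp1.le) hQnonneg]
  rw [div_le_div_iff₀ hp2 hp1]
  nlinarith
end

section
/- Let n be a positive integer, let p_1, …, p_n be real numbers with 0 < p_i < 1 for all i, let r_1, …, r_n ≥ 0, and let w be a probability distribution on the permutations π of {1, …, n} satisfying, for every index i, ∑_π w(π) · p_i · ∏_{j : π(j) < π(i)} (1 − p_j) ≥ r_i. Suppose S₀ ⊆ {1, …, n} is a subset for which the feasibility constraint is tight, i.e. ∑_{i∈S₀} r_i + ∏_{i∈S₀} (1 − p_i) = 1. Then every permutation π with w(π) > 0 places all indices of S₀ before all indices outside S₀; that is, for every i ∈ S₀ and every j ∉ S₀, π(i) < π(j). -/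
/-- Product over a superset is at most product over subset when factors are in [0,1]. -/
lemma prod_subset_le_aux {α : Type*} [DecidableEq α] (s t : Finset α) (h : s ⊆ t)
    (f : α → ℝ) (h0 : ∀ i, 0 ≤ f i) (h1 : ∀ i, f i ≤ 1) :
    ∏ i ∈ t, f i ≤ ∏ i ∈ s, f i := by
  rw [← Finset.prod_sdiff h]
  have hA : ∏ i ∈ t \ s, f i ≤ 1 := Finset.prod_le_one (fun i _ => h0 i) (fun i _ => h1 i)
  have hB : 0 ≤ ∏ i ∈ s, f i := Finset.prod_nonneg (fun i _ => h0 i)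
  calc (∏ i ∈ t \ s, f i) * ∏ i ∈ s, f i ≤ 1 * ∏ i ∈ s, f i := by
        exact mul_le_mul_of_nonneg_right hA hB
    _ = ∏ i ∈ s, f i := one_mul _

/-- Telescoping identity. -/
lemma key_ident {n : ℕ} (p : Fin n → ℝ) (π : Equiv.Perm (Fin n)) (S : Finset (Fin n)) :
    ∑ i ∈ S, p i * ∏ j ∈ S.filter (fun j => π j < π i), (1 - p j)
      + ∏ i ∈ S, (1 - p i) = 1 := by
  induction S using Finset.strongInduction with
  | _ S ih =>
    rcases S.eq_empty_or_nonempty with rfl | hS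
    · simp
    · obtain ⟨m, hmS, hmax⟩ := S.exists_max_image (fun i => π i) hS
      set S' := S.erase m with hS'
      have hss : S' ⊂ S := Finset.erase_ssubset hmS
      have hfm : S.filter (fun j => π j < π m) = S' := by
        ext j
        simp only [Finset.mem_filter, hS', Finset.mem_erase]
        constructor
        · rintro ⟨hj, hlt⟩
          exact ⟨fun h => by simp [h] at hlt, hj⟩
        · rintro ⟨hne, hj⟩
          refine ⟨hj, lt_of_le_of_ne (hmax j hj) ?_⟩
          intro h
          exact hne (π.injective h)
      have hfi : ∀ i ∈ S', S.filter (fun j => π j < π i) = S'.filter (fun j => π j < π i) := by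
        intro i hi
        ext j
        simp only [Finset.mem_filter, hS', Finset.mem_erase]
        constructor
        · rintro ⟨hj, hlt⟩
          refine ⟨⟨fun h => ?_, hj⟩, hlt⟩
          subst h
          exact absurd hlt (not_lt.mpr (hmax i (Finset.mem_of_mem_erase hi)))
        · rintro ⟨⟨_, hj⟩, hlt⟩
          exact ⟨hj, hlt⟩
      have hsum : ∑ i ∈ S, p i * ∏ j ∈ S.filter (fun j => π j < π i), (1 - p j)
          = p m * ∏ j ∈ S', (1 - p j)
            + ∑ i ∈ S', p i * ∏ j ∈ S'.filter (fun j => π j < π i), (1 - p j) := by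
        rw [← Finset.add_sum_erase _ _ hmS, hfm]
        congr 1
        exact Finset.sum_congr rfl fun i hi => by rw [hfi i hi]
      have hprod : ∏ i ∈ S, (1 - p i) = (1 - p m) * ∏ i ∈ S', (1 - p i) :=
        (Finset.mul_prod_erase _ _ hmS).symm
      have := ih S' hss
      rw [hsum, hprod]
      nlinarith [this]

/-- Second Claim of the combinatorial algorithm (Appendix B): if the
feasibility constraint is tight for `S₀`, i.e.
`∑_{i∈S₀} r i + ∏_{i∈S₀} (1 - p i) = 1`, then every permutation in the support
of a feasible distribution `w` places all indices of `S₀` before all indices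
outside `S₀`. -/
theorem stmt_10 (n : ℕ) (hn : 0 < n) (p r : Fin n → ℝ)
    (hp : ∀ i, 0 < p i ∧ p i < 1) (hr : ∀ i, 0 ≤ r i)
    (w : Equiv.Perm (Fin n) → ℝ) (hw : ∀ π, 0 ≤ w π)
    (hw1 : ∑ π : Equiv.Perm (Fin n), w π = 1)
    (hfeas : ∀ i : Fin n,
      r i ≤ ∑ π : Equiv.Perm (Fin n),
        w π * (p i * ∏ j ∈ Finset.univ.filter (fun j => π j < π i), (1 - p j)))
    (S₀ : Finset (Fin n))
    (htight : ∑ i ∈ S₀, r i + ∏ i ∈ S₀, (1 - p i) = 1) :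
    ∀ π : Equiv.Perm (Fin n), 0 < w π →
      ∀ i ∈ S₀, ∀ j ∉ S₀, π i < π j := by
  have h0 : ∀ j, (0:ℝ) ≤ 1 - p j := fun j => by linarith [(hp j).2]
  have h1 : ∀ j, (1:ℝ) - p j ≤ 1 := fun j => by linarith [(hp j).1]
  set G : Equiv.Perm (Fin n) → ℝ := fun π =>
    ∑ i ∈ S₀, p i * ∏ j ∈ Finset.univ.filter (fun j => π j < π i), (1 - p j) with hG
  set C : ℝ := 1 - ∏ i ∈ S₀, (1 - p i) with hC
  -- per-permutation bound
  have hGle : ∀ π, G π ≤ C := by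
    intro π
    have : G π ≤ ∑ i ∈ S₀, p i * ∏ j ∈ S₀.filter (fun j => π j < π i), (1 - p j) := by
      apply Finset.sum_le_sum
      intro i hi
      refine mul_le_mul_of_nonneg_left ?_ (hp i).1.le
      exact prod_subset_le_aux _ _ (Finset.filter_subset_filter _ (Finset.subset_univ S₀))
        _ h0 h1
    have hid := key_ident p π S₀
    rw [hG, hC]; linarith
  -- strict bound for bad permutations
  have hGlt : ∀ π : Equiv.Perm (Fin n), ∀ i₀ ∈ S₀, ∀ j₀ ∉ S₀, π j₀ < π i₀ → G π < C := by
    intro π i₀ hi₀ j₀ hj₀ hlt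
    have hstrict : p i₀ * ∏ j ∈ Finset.univ.filter (fun j => π j < π i₀), (1 - p j)
        < p i₀ * ∏ j ∈ S₀.filter (fun j => π j < π i₀), (1 - p j) := by
      apply mul_lt_mul_of_pos_left _ (hp i₀).1
      have hsub : insert j₀ (S₀.filter (fun j => π j < π i₀))
          ⊆ Finset.univ.filter (fun j => π j < π i₀) := by
        intro x hx
        rcases Finset.mem_insert.mp hx with rfl | hx
        · exact Finset.mem_filter.mpr ⟨Finset.mem_univ _, hlt⟩
        · exact Finset.filter_subset_filter _ (Finset.subset_univ S₀) hx
      have hj₀nin : j₀ ∉ S₀.filter (fun j => π j < π i₀) := fun h =>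
        hj₀ (Finset.mem_filter.mp h).1
      have step1 : ∏ j ∈ Finset.univ.filter (fun j => π j < π i₀), (1 - p j)
          ≤ ∏ j ∈ insert j₀ (S₀.filter (fun j => π j < π i₀)), (1 - p j) :=
        prod_subset_le_aux _ _ hsub _ h0 h1
      have step2 : ∏ j ∈ insert j₀ (S₀.filter (fun j => π j < π i₀)), (1 - p j)
          = (1 - p j₀) * ∏ j ∈ S₀.filter (fun j => π j < π i₀), (1 - p j) :=
        Finset.prod_insert hj₀nin
      have hpos : 0 < ∏ j ∈ S₀.filter (fun j => π j < π i₀), (1 - p j) :=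
        Finset.prod_pos (fun j _ => by linarith [(hp j).2])
      have : (1 - p j₀) * ∏ j ∈ S₀.filter (fun j => π j < π i₀), (1 - p j)
          < ∏ j ∈ S₀.filter (fun j => π j < π i₀), (1 - p j) := by
        nlinarith [(hp j₀).1]
      linarith
    have hle : ∀ i ∈ S₀, p i * ∏ j ∈ Finset.univ.filter (fun j => π j < π i), (1 - p j)
        ≤ p i * ∏ j ∈ S₀.filter (fun j => π j < π i), (1 - p j) := by
      intro i hi
      refine mul_le_mul_of_nonneg_left ?_ (hp i).1.le
      exact prod_subset_le_aux _ _ (Finset.filter_subset_filter _ (Finset.subset_univ S₀))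
        _ h0 h1
    have hsumlt : G π < ∑ i ∈ S₀, p i * ∏ j ∈ S₀.filter (fun j => π j < π i), (1 - p j) :=
      Finset.sum_lt_sum hle ⟨i₀, hi₀, hstrict⟩
    have hid := key_ident p π S₀
    rw [hC]; linarith
  -- averaging
  have hA : ∑ i ∈ S₀, r i ≤ ∑ π : Equiv.Perm (Fin n), w π * G π := by
    have : ∑ π : Equiv.Perm (Fin n), w π * G π
        = ∑ i ∈ S₀, ∑ π : Equiv.Perm (Fin n),
            w π * (p i * ∏ j ∈ Finset.univ.filter (fun j => π j < π i), (1 - p j)) := by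
      rw [Finset.sum_comm]
      exact Finset.sum_congr rfl fun π _ => by rw [hG, Finset.mul_sum]
    rw [this]
    exact Finset.sum_le_sum fun i _ => hfeas i
  have hB : ∑ π : Equiv.Perm (Fin n), w π * G π ≤ C := by
    calc ∑ π : Equiv.Perm (Fin n), w π * G π
        ≤ ∑ π : Equiv.Perm (Fin n), w π * C :=
          Finset.sum_le_sum fun π _ => mul_le_mul_of_nonneg_left (hGle π) (hw π)
      _ = C := by rw [← Finset.sum_mul, hw1, one_mul]
  have hrC : ∑ i ∈ S₀, r i = C := by
    have : ∑ i ∈ S₀, r i ≤ C := le_trans hA hB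
    rw [hC]; linarith
  have hEq : ∑ π : Equiv.Perm (Fin n), w π * (C - G π) = 0 := by
    have : ∑ π : Equiv.Perm (Fin n), w π * (C - G π)
        = C - ∑ π : Equiv.Perm (Fin n), w π * G π := by
      simp only [mul_sub]
      rw [Finset.sum_sub_distrib, ← Finset.sum_mul, hw1, one_mul]
    rw [this]
    have h2 : C ≤ ∑ π : Equiv.Perm (Fin n), w π * G π := hrC ▸ hA
    linarith
  have hzero : ∀ π : Equiv.Perm (Fin n), w π * (C - G π) = 0 := by
    have := (Finset.sum_eq_zero_iff_of_nonneg
      (fun π _ => mul_nonneg (hw π) (by linarith [hGle π]))).mp hEq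
    exact fun π => this π (Finset.mem_univ π)
  intro π hwπ i hi j hj
  by_contra hcon
  have hne : π i ≠ π j := fun h => by
    have := π.injective h; subst this; exact hj hi
  have hlt : π j < π i := lt_of_le_of_ne (not_lt.mp hcon) hne.symm
  have hGπ : G π = C := by
    have := hzero π
    rcases mul_eq_zero.mp this with h | h
    · exact absurd h (ne_of_gt hwπ)
    · linarith
  exact absurd hGπ (ne_of_lt (hGlt π i hi j hj hlt))
end

section
/- Let n be a positive integer, let p_1, …, p_n be real numbers with 0 < p_i < 1 for all i, let r_1, …, r_n ≥ 0 satisfy r_1/p_1 ≥ r_2/p_2 ≥ … ≥ r_n/p_n, and let 0 ≤ z < 1. Define r′_j := (r_j − z · p_j · ∏_{i>j} (1 − p_i)) / (1 − z) for each j. Then for every i ∈ {1, …, n−1}, r′_i/p_i ≥ r′_{i+1}/p_{i+1}; that is, the transformation r ↦ r′ preserves the decreasing order of the ratios r_j/p_j. -/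
/-- Correctness of the slack-removal Step 1 of the combinatorial algorithm
(Appendix B): the transformation
`r j ↦ r′ j = (r j - z · p j · ∏_{i>j} (1 - p i)) / (1 - z)` preserves the
decreasing order of the ratios `r j / p j`. -/
theorem stmt_11 (n : ℕ) (hn : 0 < n) (p r : Fin n → ℝ)
    (hp : ∀ i, 0 < p i ∧ p i < 1) (hr : ∀ i, 0 ≤ r i)
    (hsort : ∀ i j : Fin n, i ≤ j → r j / p j ≤ r i / p i)
    (z : ℝ) (hz0 : 0 ≤ z) (hz1 : z < 1)
    (r' : Fin n → ℝ)
    (hr' : ∀ j : Fin n,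
      r' j = (r j - z * p j * ∏ i ∈ Finset.univ.filter (fun i => j < i), (1 - p i))
              / (1 - z)) :
    ∀ (i : Fin n) (h : (i : ℕ) + 1 < n),
      r' ⟨(i : ℕ) + 1, h⟩ / p ⟨(i : ℕ) + 1, h⟩ ≤ r' i / p i := by
  intro i h
  set j : Fin n := ⟨(i : ℕ) + 1, h⟩ with hj
  have hij : i < j := by simp [hj, Fin.lt_def]
  have hQpos : (0:ℝ) < ∏ k ∈ Finset.univ.filter (fun k => j < k), (1 - p k) := by
    apply Finset.prod_pos
    intro k _
    linarith [(hp k).2]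
  set Q : ℝ := ∏ k ∈ Finset.univ.filter (fun k => j < k), (1 - p k) with hQ
  have hseteq : Finset.univ.filter (fun k => i < k) =
      insert j (Finset.univ.filter (fun k => j < k)) := by
    ext k
    simp only [Finset.mem_filter, Finset.mem_univ, true_and, Finset.mem_insert]
    constructor
    · intro hk
      rcases eq_or_lt_of_le (Nat.succ_le_of_lt (Fin.lt_def.mp hk)) with h1 | h1
      · left; exact Fin.ext h1.symm
      · right; exact Fin.lt_def.mpr h1
    · rintro (rfl | hk)
      · exact hij
      · exact lt_trans hij hk
  have hQi : ∏ k ∈ Finset.univ.filter (fun k => i < k), (1 - p k) = (1 - p j) * Q := by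
    rw [hseteq, Finset.prod_insert (by simp)]
  have hpz : (0:ℝ) < 1 - z := by linarith
  have hpa := (hp i).1
  have hpb := (hp j).1
  have hsij := hsort i j (le_of_lt hij)
  have hmul : r j * p i ≤ r i * p j := by
    rw [div_le_div_iff₀ hpb hpa] at hsij
    exact hsij
  rw [hr' i, hr' j, hQi, div_div, div_div, div_le_div_iff₀ (by positivity) (by positivity)]
  have h1 : 0 ≤ (1 - z) * (r i * p j - r j * p i) :=
    mul_nonneg hpz.le (by linarith)
  have h2 : 0 ≤ (1 - z) * (z * p i * p j * p j * Q) := by positivity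
  nlinarith [h1, h2]
end
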